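/- Let (x_i)_{i=1}^n and (y_i)_{i=1}^n be complex numbers with each y_i ≠ 0, and suppose |x_i/y_i - 1| ≤ ε for all i, where ε ≤ 1/n. Then |∏_{i=1}^n x_i - ∏_{i=1}^n y_i| ≤ 2nε · ∏_{i=1}^n |y_i|. -/

import Mathlib

open Finset

/-- norm of product minus one bound -/
lemma aux_prod_sub_one {ι : Type*} (s : Finset ι) (z : ι → ℂ) :
    ‖∏ i ∈ s, z i - 1‖ ≤ ∏ i ∈ s, (1 + ‖z i - 1‖) - 1 := by
  induction s using Finset.cons_induction with
  | empty => simp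
  | cons a s ha ih =>
    rw [Finset.prod_cons, Finset.prod_cons]
    have key : z a * ∏ i ∈ s, z i - 1 = (z a - 1) * ∏ i ∈ s, z i + (∏ i ∈ s, z i - 1) := by
      ring
    rw [key]
    have h1 : ‖∏ i ∈ s, z i‖ ≤ ∏ i ∈ s, (1 + ‖z i - 1‖) := by
      have : ‖∏ i ∈ s, z i‖ ≤ ‖∏ i ∈ s, z i - 1‖ + 1 := by
        calc ‖∏ i ∈ s, z i‖ = ‖(∏ i ∈ s, z i - 1) + 1‖ := by ring_nf
          _ ≤ ‖∏ i ∈ s, z i - 1‖ + ‖(1:ℂ)‖ := norm_add_le _ _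
          _ = ‖∏ i ∈ s, z i - 1‖ + 1 := by simp
      linarith [ih]
    calc ‖(z a - 1) * ∏ i ∈ s, z i + (∏ i ∈ s, z i - 1)‖
        ≤ ‖(z a - 1) * ∏ i ∈ s, z i‖ + ‖∏ i ∈ s, z i - 1‖ :=
          norm_add_le _ _
      _ = ‖z a - 1‖ * ‖∏ i ∈ s, z i‖ + ‖∏ i ∈ s, z i - 1‖ := by
          rw [norm_mul]
      _ ≤ ‖z a - 1‖ * ∏ i ∈ s, (1 + ‖z i - 1‖) +
            (∏ i ∈ s, (1 + ‖z i - 1‖) - 1) := by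
          gcongr
      _ = (1 + ‖z a - 1‖) * ∏ i ∈ s, (1 + ‖z i - 1‖) - 1 := by ring

/-- (1+ε)^n ≤ 1 + nε + (nε)^2 when nε ≤ 1 -/
lemma aux_pow_bound (n : ℕ) (ε : ℝ) (hε : 0 ≤ ε) (hnε : (n : ℝ) * ε ≤ 1) :
    (1 + ε) ^ n ≤ 1 + n * ε + (n * ε) ^ 2 := by
  induction n with
  | zero => simp
  | succ n ih =>
    have hn1 : (n : ℝ) * ε ≤ 1 := by
      have : (n : ℝ) ≤ (n + 1 : ℕ) := by exact_mod_cast Nat.le_succ n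
      nlinarith [(Nat.cast_nonneg n : (0:ℝ) ≤ n)]
    have ih' := ih hn1
    have hcast : ((n + 1 : ℕ) : ℝ) = (n : ℝ) + 1 := by push_cast; ring
    rw [pow_succ, hcast]
    have hn0 : (0:ℝ) ≤ n := Nat.cast_nonneg n
    have hnε1 : (n : ℝ) * ε + ε ≤ 1 := by rw [hcast] at hnε; nlinarith
    nlinarith [mul_nonneg hn0 hε, sq_nonneg ((n:ℝ)*ε), pow_nonneg (by linarith : (0:ℝ) ≤ 1 + ε) n]

theorem stmt6 (n : ℕ) (hn : 1 ≤ n) (ε : ℝ) (hε : 0 < ε) (hnε : (n : ℝ) * ε ≤ 1)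
    (x y : Fin n → ℂ) (hy : ∀ i, y i ≠ 0)
    (h : ∀ i, ‖x i / y i - 1‖ ≤ ε) :
    ‖∏ i, x i - ∏ i, y i‖ ≤ 2 * n * ε * ∏ i, ‖y i‖ := by
  have key : ∏ i, x i - ∏ i, y i = (∏ i, (x i / y i) - 1) * ∏ i, y i := by
    rw [sub_mul, one_mul, ← Finset.prod_mul_distrib]
    congr 1
    exact Finset.prod_congr rfl fun i _ => (div_mul_cancel₀ _ (hy i)).symm
  rw [key, norm_mul, norm_prod]
  have h1 : ‖∏ i, (x i / y i) - 1‖ ≤ 2 * n * ε := by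
    calc ‖∏ i, (x i / y i) - 1‖
        ≤ ∏ i, (1 + ‖x i / y i - 1‖) - 1 := aux_prod_sub_one _ _
      _ ≤ (1 + ε) ^ n - 1 := by
          have := Finset.prod_le_prod (s := Finset.univ)
            (f := fun i : Fin n => 1 + ‖x i / y i - 1‖)
            (g := fun _ => 1 + ε)
            (fun i _ => by positivity)
            (fun i _ => by linarith [h i])
          rw [Finset.prod_const, Finset.card_univ, Fintype.card_fin] at this
          linarith
      _ ≤ 1 + n * ε + (n * ε) ^ 2 - 1 := by linarith [aux_pow_bound n ε hε.le hnε]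
      _ ≤ 2 * n * ε := by
          nlinarith [hnε, mul_nonneg (Nat.cast_nonneg n : (0:ℝ) ≤ n) hε.le]
  have h2 : (0:ℝ) ≤ ∏ i, ‖y i‖ :=
    Finset.prod_nonneg fun i _ => norm_nonneg _
  exact mul_le_mul_of_nonneg_right h1 h2
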